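/- arXiv:2105.01591 — 2 statements merged into one kernel-verified Lean document; each statement's English description precedes it below -/
import Mathlib

section
/- Let π, ρ ∈ Sₙ have separated descents at position k (π has no descents before k, ρ has no descents after k). Define π⋆ρ on [1-k, 2n-k] by: π⋆ρ(i) = π(i+k) - k for i ∈ [1-k, 0]; π⋆ρ(i) = ρ(i) + n - k for i ∈ [1, k]; π⋆ρ(i) = π(i) - k for i ∈ [k+1, n]; and for i ∈ [n+1, 2n-k], π⋆ρ(i) is the (i-n)th smallest element of [1-k, 2n-k] not among the previously assigned values. Then π⋆ρ is a bijection from [1-k, 2n-k] to [1-k, 2n-k]. -/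
/-- `π` has no descents before position `k`: every descent `i` satisfies `i ≥ k`. -/
def NoDescentsBefore (π : ℤ → ℤ) (k : ℤ) : Prop :=
  ∀ i : ℤ, 1 ≤ i → i < k → π i < π (i + 1)

/-- `ρ` has no descents after position `k`: every descent `i` satisfies `i ≤ k`. -/
def NoDescentsAfter (ρ : ℤ → ℤ) (k n : ℤ) : Prop :=
  ∀ i : ℤ, k < i → i < n → ρ i < ρ (i + 1)

/-- The star operation `π⋆ρ` defined on the interval `[1-k, 2n-k]`. -/
noncomputable def starMap (n k : ℤ) (π ρ : ℤ → ℤ) : ℤ → ℤ := fun i =>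
  if 1 - k ≤ i ∧ i ≤ 0 then π (i + k) - k
  else if 1 ≤ i ∧ i ≤ k then ρ i + n - k
  else if k + 1 ≤ i ∧ i ≤ n then π i - k
  else
    ((Finset.Icc (1 - k) (2 * n - k) \
        (Finset.Icc (1 - k) n).image (fun j =>
          if 1 - k ≤ j ∧ j ≤ 0 then π (j + k) - k
          else if 1 ≤ j ∧ j ≤ k then ρ j + n - k
          else π j - k)).sort (· ≤ ·)).getD (i - n - 1).toNat 0

/-- The "first part" of the star map. -/
def gfun (n k : ℤ) (π ρ : ℤ → ℤ) : ℤ → ℤ := fun j =>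
  if 1 - k ≤ j ∧ j ≤ 0 then π (j + k) - k
  else if 1 ≤ j ∧ j ≤ k then ρ j + n - k
  else π j - k

theorem star_bijOn (n k : ℤ) (π ρ : ℤ → ℤ) (hn : 1 ≤ n) (hk1 : 1 ≤ k) (hkn : k ≤ n)
    (hπ : Set.BijOn π (Set.Icc 1 n) (Set.Icc 1 n))
    (hρ : Set.BijOn ρ (Set.Icc 1 n) (Set.Icc 1 n))
    (hπd : NoDescentsBefore π k) (hρd : NoDescentsAfter ρ k n) :
    Set.BijOn (starMap n k π ρ) (Set.Icc (1 - k) (2 * n - k))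
      (Set.Icc (1 - k) (2 * n - k)) := by
  classical
  obtain ⟨hπm, hπi, -⟩ := hπ
  obtain ⟨hρm, hρi, -⟩ := hρ
  set g : ℤ → ℤ := gfun n k π ρ with hgset
  set I : Finset ℤ := Finset.Icc (1 - k) (2 * n - k) with hI
  set S : Finset ℤ := (Finset.Icc (1 - k) n).image g with hS
  set L : List ℤ := (I \ S).sort (· ≤ ·) with hL
  have hπb : ∀ x, 1 ≤ x ∧ x ≤ n → 1 ≤ π x ∧ π x ≤ n := fun x hx =>
    Set.mem_Icc.mp (hπm (Set.mem_Icc.mpr hx))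
  have hρb : ∀ x, 1 ≤ x ∧ x ≤ n → 1 ≤ ρ x ∧ ρ x ≤ n := fun x hx =>
    Set.mem_Icc.mp (hρm (Set.mem_Icc.mpr hx))
  have hgA : ∀ i, 1 - k ≤ i ∧ i ≤ 0 → g i = π (i + k) - k := by
    intro i hi; simp only [hgset, gfun]; rw [if_pos hi]
  have hgB : ∀ i, 1 ≤ i ∧ i ≤ k → g i = ρ i + n - k := by
    intro i hi; simp only [hgset, gfun]; rw [if_neg (by omega), if_pos hi]
  have hgC : ∀ i, k + 1 ≤ i ∧ i ≤ n → g i = π i - k := by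
    intro i hi; simp only [hgset, gfun]; rw [if_neg (by omega), if_neg (by omega)]
  have haux : ∀ a, 1 - k ≤ a → a ≤ n → ¬(1 ≤ a ∧ a ≤ k) →
      ∃ x, 1 ≤ x ∧ x ≤ n ∧ g a = π x - k ∧ ((x = a + k ∧ a ≤ 0) ∨ (x = a ∧ k + 1 ≤ a)) := by
    intro a h1 h2 h3
    by_cases h0 : a ≤ 0
    · exact ⟨a + k, by omega, by omega, hgA a ⟨h1, h0⟩, Or.inl ⟨rfl, h0⟩⟩
    · exact ⟨a, by omega, h2, hgC a ⟨by omega, h2⟩, Or.inr ⟨rfl, by omega⟩⟩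
  have hginj : ∀ a, 1 - k ≤ a → a ≤ n → ∀ b, 1 - k ≤ b → b ≤ n → g a = g b → a = b := by
    intro a ha1 ha2 b hb1 hb2 hab
    by_cases hamid : 1 ≤ a ∧ a ≤ k
    · by_cases hbmid : 1 ≤ b ∧ b ≤ k
      · rw [hgB a hamid, hgB b hbmid] at hab
        exact hρi (Set.mem_Icc.mpr ⟨hamid.1, le_trans hamid.2 hkn⟩)
          (Set.mem_Icc.mpr ⟨hbmid.1, le_trans hbmid.2 hkn⟩) (by omega)
      · obtain ⟨x, hx1, hx2, hx3, -⟩ := haux b hb1 hb2 hbmid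
        rw [hgB a hamid, hx3] at hab
        have h1 := hρb a ⟨hamid.1, le_trans hamid.2 hkn⟩
        have h2 := hπb x ⟨hx1, hx2⟩
        omega
    · by_cases hbmid : 1 ≤ b ∧ b ≤ k
      · obtain ⟨x, hx1, hx2, hx3, -⟩ := haux a ha1 ha2 hamid
        rw [hgB b hbmid, hx3] at hab
        have h1 := hρb b ⟨hbmid.1, le_trans hbmid.2 hkn⟩
        have h2 := hπb x ⟨hx1, hx2⟩
        omega
      · obtain ⟨x, hx1, hx2, hx3, hx4⟩ := haux a ha1 ha2 hamid
        obtain ⟨y, hy1, hy2, hy3, hy4⟩ := haux b hb1 hb2 hbmid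
        rw [hx3, hy3] at hab
        have hxy : x = y := hπi (Set.mem_Icc.mpr ⟨hx1, hx2⟩)
          (Set.mem_Icc.mpr ⟨hy1, hy2⟩) (by omega)
        omega
  have hgmem : ∀ i, 1 - k ≤ i → i ≤ n → 1 - k ≤ g i ∧ g i ≤ 2 * n - k := by
    intro i h1 h2
    by_cases hmid : 1 ≤ i ∧ i ≤ k
    · rw [hgB i hmid]
      have := hρb i ⟨hmid.1, le_trans hmid.2 hkn⟩
      omega
    · obtain ⟨x, hx1, hx2, hx3, -⟩ := haux i h1 h2 hmid
      rw [hx3]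
      have := hπb x ⟨hx1, hx2⟩
      omega
  -- basic facts about starMap
  have hstar : ∀ i : ℤ, starMap n k π ρ i =
      if 1 - k ≤ i ∧ i ≤ 0 then π (i + k) - k
      else if 1 ≤ i ∧ i ≤ k then ρ i + n - k
      else if k + 1 ≤ i ∧ i ≤ n then π i - k
      else L.getD (i - n - 1).toNat 0 := fun i => rfl
  have hstar_g : ∀ i : ℤ, 1 - k ≤ i → i ≤ n → starMap n k π ρ i = g i := by
    intro i h1 h2
    rw [hstar i]
    by_cases c1 : 1 - k ≤ i ∧ i ≤ 0
    · rw [if_pos c1, hgA i c1]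
    · by_cases c2 : 1 ≤ i ∧ i ≤ k
      · rw [if_neg c1, if_pos c2, hgB i c2]
      · have c3 : k + 1 ≤ i ∧ i ≤ n := by omega
        rw [if_neg c1, if_neg c2, if_pos c3, hgC i c3]
  have hstar_L : ∀ i : ℤ, n + 1 ≤ i → starMap n k π ρ i = L.getD (i - n - 1).toNat 0 := by
    intro i h1
    rw [hstar i, if_neg (by omega), if_neg (by omega), if_neg (by omega)]
  -- cardinalities
  have hIcard : I.card = (2 * n).toNat := by rw [hI, Int.card_Icc]; omega
  have hSsub : S ⊆ I := by
    intro x hx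
    rw [hS, Finset.mem_image] at hx
    obtain ⟨i, hi, rfl⟩ := hx
    rw [Finset.mem_Icc] at hi
    exact Finset.mem_Icc.mpr (hgmem i hi.1 hi.2)
  have hScard : S.card = (n + k).toNat := by
    rw [hS, Finset.card_image_of_injOn, Int.card_Icc]
    · omega
    · intro a ha b hb hab
      rw [Finset.mem_coe, Finset.mem_Icc] at ha hb
      exact hginj a ha.1 ha.2 b hb.1 hb.2 hab
  have hLlen : L.length = (n - k).toNat := by
    rw [hL, Finset.length_sort, Finset.card_sdiff_of_subset hSsub, hIcard, hScard]
    omega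
  have hnodup : L.Nodup := Finset.sort_nodup _ _
  have hLmem : ∀ x ∈ L, x ∈ I ∧ x ∉ S := by
    intro x hx
    rw [hL, Finset.mem_sort, Finset.mem_sdiff] at hx
    exact hx
  have hidx : ∀ i : ℤ, n + 1 ≤ i → i ≤ 2 * n - k → (i - n - 1).toNat < L.length := by
    intro i h1 h2; rw [hLlen]; omega
  -- maps to
  have hmaps : ∀ a ∈ I, starMap n k π ρ a ∈ I := by
    intro a ha
    rw [hI, Finset.mem_Icc] at ha
    by_cases h : a ≤ n
    · rw [hstar_g a ha.1 h, hI, Finset.mem_Icc]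
      exact hgmem a ha.1 h
    · rw [hstar_L a (by omega), List.getD_eq_getElem _ _ (hidx a (by omega) ha.2)]
      exact (hLmem _ (List.getElem_mem _)).1
  -- injectivity
  have hinj : ∀ a ∈ I, ∀ b ∈ I, starMap n k π ρ a = starMap n k π ρ b → a = b := by
    intro a ha b hb hab
    rw [hI, Finset.mem_Icc] at ha hb
    have hgS : ∀ c, 1 - k ≤ c → c ≤ n → g c ∈ S := by
      intro c h1 h2
      rw [hS]
      exact Finset.mem_image_of_mem g (Finset.mem_Icc.mpr ⟨h1, h2⟩)
    by_cases h1 : a ≤ n <;> by_cases h2 : b ≤ n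
    · rw [hstar_g a ha.1 h1, hstar_g b hb.1 h2] at hab
      exact hginj a ha.1 h1 b hb.1 h2 hab
    · rw [hstar_g a ha.1 h1, hstar_L b (by omega),
        List.getD_eq_getElem _ _ (hidx b (by omega) hb.2)] at hab
      exact absurd (hab ▸ hgS a ha.1 h1) (hLmem _ (List.getElem_mem _)).2
    · rw [hstar_L a (by omega), hstar_g b hb.1 h2,
        List.getD_eq_getElem _ _ (hidx a (by omega) ha.2)] at hab
      exact absurd (hab ▸ hgS b hb.1 h2) (hLmem _ (List.getElem_mem _)).2
    · rw [hstar_L a (by omega), hstar_L b (by omega),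
        List.getD_eq_getElem _ _ (hidx a (by omega) ha.2),
        List.getD_eq_getElem _ _ (hidx b (by omega) hb.2)] at hab
      have := hnodup.getElem_inj_iff.mp hab
      omega
  -- surjectivity from injectivity and cardinality
  have hsurj := Finset.surj_on_of_inj_on_of_card_le (s := I) (t := I)
    (fun a _ => starMap n k π ρ a) (fun a ha => hmaps a ha)
    (fun a₁ a₂ ha₁ ha₂ e => hinj a₁ ha₁ a₂ ha₂ e) le_rfl
  have hIcoe : Set.Icc (1 - k) (2 * n - k) = (I : Set ℤ) := by
    rw [hI, Finset.coe_Icc]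
  rw [hIcoe]
  refine ⟨fun x hx => hmaps x (Finset.mem_coe.mp hx),
    fun x hx y hy e => hinj x (Finset.mem_coe.mp hx) y (Finset.mem_coe.mp hy) e,
    fun b hb => ?_⟩
  obtain ⟨a, ha, e⟩ := hsurj b (Finset.mem_coe.mp hb)
  exact ⟨a, Finset.mem_coe.mpr ha, e.symm⟩
end

section
/- Let π, ρ ∈ Sₙ have separated descents at position k. Then the Coxeter length of π⋆ρ (viewed as a permutation of the interval [1-k, 2n-k], i.e., the number of inversions) equals ℓ(π) + ℓ(ρ) + k(n-k). -/
/-- The number of inversions of `f` on the interval `[a, b]`. -/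
noncomputable def invCount (f : ℤ → ℤ) (a b : ℤ) : ℕ :=
  ((Finset.Icc a b ×ˢ Finset.Icc a b).filter (fun p => p.1 < p.2 ∧ f p.2 < f p.1)).card

lemma mono_of_succ (f : ℤ → ℤ) (a b : ℤ) (h : ∀ i, a ≤ i → i < b → f i < f (i+1)) :
    ∀ x y, a ≤ x → x < y → y ≤ b → f x < f y := by
  intro x y hax hxy hyb
  have := strictMonoOn_of_lt_add_one (f := f) (s := Set.Icc a b) Set.ordConnected_Icc
    (fun i _ hi hi1 => h i hi.1 (by have := hi1.2; omega))
  exact this (Set.mem_Icc.mpr ⟨hax, by omega⟩) (Set.mem_Icc.mpr ⟨by omega, hyb⟩) hxy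

lemma sortD (n k : ℤ) (π ρ : ℤ → ℤ) (hn : 1 ≤ n) (hk1 : 1 ≤ k) (hkn : k ≤ n)
    (hπ : Set.BijOn π (Set.Icc 1 n) (Set.Icc 1 n))
    (hρ : Set.BijOn ρ (Set.Icc 1 n) (Set.Icc 1 n))
    (hρd : NoDescentsAfter ρ k n) :
    ((Finset.Icc (1 - k) (2 * n - k) \
        (Finset.Icc (1 - k) n).image (fun j =>
          if 1 - k ≤ j ∧ j ≤ 0 then π (j + k) - k
          else if 1 ≤ j ∧ j ≤ k then ρ j + n - k
          else π j - k)).sort (· ≤ ·))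
      = (List.range (n-k).toNat).map (fun m : ℕ => ρ (k+1+(m:ℤ)) + n - k) := by
  have hρm := mono_of_succ ρ (k+1) n (fun i hi h2 => hρd i (by omega) h2)
  have hmemF : ∀ x : ℤ, (x ∈ (Finset.Icc (1 - k) n).image (fun j =>
          if 1 - k ≤ j ∧ j ≤ 0 then π (j + k) - k
          else if 1 ≤ j ∧ j ≤ k then ρ j + n - k
          else π j - k)) ↔
      ((1-k ≤ x ∧ x ≤ n-k) ∨ ∃ j, 1 ≤ j ∧ j ≤ k ∧ ρ j + n - k = x) := by
    intro x
    simp only [Finset.mem_image, Finset.mem_Icc]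
    constructor
    · rintro ⟨j, hj, rfl⟩
      by_cases h1 : 1 - k ≤ j ∧ j ≤ 0
      · left
        rw [if_pos h1]
        have := Set.mem_Icc.mp (hπ.mapsTo (Set.mem_Icc.mpr ⟨by omega, by omega⟩ : j + k ∈ Set.Icc 1 n))
        omega
      · by_cases h2 : 1 ≤ j ∧ j ≤ k
        · right
          exact ⟨j, h2.1, h2.2, by rw [if_neg h1, if_pos h2]⟩
        · left
          rw [if_neg h1, if_neg h2]
          have := Set.mem_Icc.mp (hπ.mapsTo (Set.mem_Icc.mpr ⟨by omega, by omega⟩ : j ∈ Set.Icc 1 n))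
          omega
    · rintro (⟨h1, h2⟩ | ⟨j, hj1, hj2, rfl⟩)
      · obtain ⟨y, hy, hxy⟩ := hπ.surjOn (Set.mem_Icc.mpr ⟨by omega, by omega⟩ : x + k ∈ Set.Icc 1 n)
        rw [Set.mem_Icc] at hy
        by_cases hyk : y ≤ k
        · exact ⟨y - k, ⟨by omega, by omega⟩, by
            rw [if_pos ⟨by omega, by omega⟩]
            rw [show y - k + k = y by ring, hxy]; ring⟩
        · exact ⟨y, ⟨by omega, by omega⟩, by rw [if_neg (by omega), if_neg (by omega), hxy]; ring⟩
      · exact ⟨j, ⟨by omega, by omega⟩, by rw [if_neg (by omega), if_pos ⟨hj1, hj2⟩]⟩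
  have hD : Finset.Icc (1 - k) (2 * n - k) \
        (Finset.Icc (1 - k) n).image (fun j =>
          if 1 - k ≤ j ∧ j ≤ 0 then π (j + k) - k
          else if 1 ≤ j ∧ j ≤ k then ρ j + n - k
          else π j - k)
      = (Finset.Icc (k+1) n).image (fun j => ρ j + n - k) := by
    ext x
    simp only [Finset.mem_sdiff, hmemF, Finset.mem_Icc, Finset.mem_image]
    constructor
    · rintro ⟨⟨hx1, hx2⟩, hnot⟩
      push_neg at hnot
      obtain ⟨hnA, hnB⟩ := hnot
      obtain ⟨y, hy, hxy⟩ := hρ.surjOn (Set.mem_Icc.mpr ⟨by omega, by omega⟩ : x - n + k ∈ Set.Icc 1 n)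
      rw [Set.mem_Icc] at hy
      refine ⟨y, ⟨?_, hy.2⟩, by omega⟩
      by_contra hyk
      exact hnB y hy.1 (by omega) (by omega)
    · rintro ⟨j, hj, rfl⟩
      have hb := Set.mem_Icc.mp (hρ.mapsTo (Set.mem_Icc.mpr ⟨by omega, by omega⟩ : j ∈ Set.Icc 1 n))
      refine ⟨⟨by omega, by omega⟩, ?_⟩
      push_neg
      refine ⟨fun _ => by omega, fun j' h1 h2 heq => ?_⟩
      have : j' = j := hρ.injOn (Set.mem_Icc.mpr ⟨by omega, by omega⟩)
        (Set.mem_Icc.mpr ⟨by omega, by omega⟩) (by omega)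
      omega
  rw [hD]
  refine (fun hp hs => List.Perm.eq_of_pairwise' (Finset.pairwise_sort _ _) hs hp) ?_ ?_
  · apply List.perm_of_nodup_nodup_toFinset_eq (Finset.sort_nodup _ _)
    · rw [List.nodup_iff_getElem?_ne_getElem?]
      intro i j hij hj
      simp only [List.length_map, List.length_range] at hj
      rw [List.getElem?_eq_getElem (by simpa using by omega), List.getElem?_eq_getElem (by simpa using hj)]
      simp only [List.getElem_map, List.getElem_range, Ne, Option.some.injEq]
      have : ρ (k+1+(i:ℤ)) < ρ (k+1+(j:ℤ)) := hρm _ _ (by omega) (by omega) (by omega)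
      omega
    · rw [Finset.sort_toFinset]
      ext x
      simp only [List.mem_toFinset, List.mem_map, List.mem_range, Finset.mem_image, Finset.mem_Icc]
      constructor
      · rintro ⟨j, ⟨hj1, hj2⟩, rfl⟩
        refine ⟨(j - k - 1).toNat, by omega, ?_⟩
        have : (k+1+((j-k-1).toNat : ℤ)) = j := by omega
        rw [this]
      · rintro ⟨m, hm, rfl⟩
        exact ⟨k + 1 + m, ⟨by omega, by omega⟩, rfl⟩
  · rw [List.pairwise_iff_getElem]
    intro i j hi hj hij
    simp only [List.length_map, List.length_range] at hi hj
    simp only [List.getElem_map, List.getElem_range]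
    have : ρ (k+1+(i:ℤ)) < ρ (k+1+(j:ℤ)) := hρm _ _ (by omega) (by omega) (by omega)
    omega

lemma star_D (n k : ℤ) (π ρ : ℤ → ℤ) (hn : 1 ≤ n) (hk1 : 1 ≤ k) (hkn : k ≤ n)
    (hπ : Set.BijOn π (Set.Icc 1 n) (Set.Icc 1 n))
    (hρ : Set.BijOn ρ (Set.Icc 1 n) (Set.Icc 1 n))
    (hρd : NoDescentsAfter ρ k n)
    (i : ℤ) (hi1 : n < i) (hi2 : i ≤ 2*n - k) :
    starMap n k π ρ i = ρ (i - n + k) + n - k := by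
  simp only [starMap]
  rw [if_neg (by omega), if_neg (by omega), if_neg (by omega),
    sortD n k π ρ hn hk1 hkn hπ hρ hρd]
  rw [List.getD_eq_getElem?_getD, List.getElem?_map,
    List.getElem?_range (show (i - n - 1).toNat < (n-k).toNat by omega)]
  simp only [Option.map_some, Option.getD_some]
  have : (k + 1 + ((i - n - 1).toNat : ℤ)) = i - n + k := by omega
  rw [this]

/-- Local abbreviation for the double-sum form of inversion counting. -/
def S (g : ℤ → ℤ) (s t : Finset ℤ) : ℕ :=
  ∑ i ∈ s, ∑ j ∈ t, if i < j ∧ g j < g i then 1 else 0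

lemma invCount_eq_S (g : ℤ → ℤ) (a b : ℤ) :
    invCount g a b = S g (Finset.Icc a b) (Finset.Icc a b) := by
  rw [invCount, Finset.card_filter, Finset.sum_product]
  rfl

lemma S_union_left (g : ℤ → ℤ) (s t u : Finset ℤ) (h : Disjoint s t) :
    S g (s ∪ t) u = S g s u + S g t u :=
  Finset.sum_union h

lemma S_union_right (g : ℤ → ℤ) (s t u : Finset ℤ) (h : Disjoint t u) :
    S g s (t ∪ u) = S g s t + S g s u := by
  unfold S
  rw [← Finset.sum_add_distrib]
  exact Finset.sum_congr rfl (fun i _ => Finset.sum_union h)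

lemma S_zero (g : ℤ → ℤ) (s t : Finset ℤ) (h : ∀ i ∈ s, ∀ j ∈ t, ¬(i < j ∧ g j < g i)) :
    S g s t = 0 :=
  Finset.sum_eq_zero (fun i hi => Finset.sum_eq_zero (fun j hj => if_neg (h i hi j hj)))

lemma S_full (g : ℤ → ℤ) (s t : Finset ℤ) (h : ∀ i ∈ s, ∀ j ∈ t, i < j ∧ g j < g i) :
    S g s t = s.card * t.card := by
  unfold S
  have h1 : ∀ i ∈ s, (∑ j ∈ t, if i < j ∧ g j < g i then 1 else 0) = t.card := fun i hi => by
    rw [Finset.sum_congr rfl (fun j hj => if_pos (h i hi j hj)), Finset.sum_const, smul_eq_mul,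
      mul_one]
  rw [Finset.sum_congr rfl h1, Finset.sum_const, smul_eq_mul]

lemma S_congr (g g' : ℤ → ℤ) (s t : Finset ℤ)
    (h : ∀ i ∈ s, ∀ j ∈ t, ((i < j ∧ g j < g i) ↔ (i < j ∧ g' j < g' i))) :
    S g s t = S g' s t :=
  Finset.sum_congr rfl (fun i hi => Finset.sum_congr rfl
    (fun j hj => if_congr (h i hi j hj) rfl rfl))

lemma S_shift (g h : ℤ → ℤ) (a b c d a' b' c' d' p q : ℤ)
    (ha : a' = a + p) (hb : b' = b + p) (hc : c' = c + q) (hd : d' = d + q)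
    (hcond : ∀ i j, a < i → i ≤ b → c < j → j ≤ d →
      ((i + p < j + q ∧ g (j + q) < g (i + p)) ↔ (i < j ∧ h j < h i))) :
    S g (Finset.Ioc a' b') (Finset.Ioc c' d') = S h (Finset.Ioc a b) (Finset.Ioc c d) := by
  subst ha hb hc hd
  unfold S
  rw [← Finset.map_add_right_Ioc a b p, ← Finset.map_add_right_Ioc c d q, Finset.sum_map]
  refine Finset.sum_congr rfl fun i hi => ?_
  rw [Finset.sum_map]
  refine Finset.sum_congr rfl fun j hj => ?_
  simp only [Finset.mem_Ioc] at hi hj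
  simp only [addRightEmbedding_apply]
  exact if_congr (hcond i j hi.1 hi.2 hj.1 hj.2) rfl rfl

theorem star_length (n k : ℤ) (π ρ : ℤ → ℤ) (hn : 1 ≤ n) (hk1 : 1 ≤ k) (hkn : k ≤ n)
    (hπ : Set.BijOn π (Set.Icc 1 n) (Set.Icc 1 n))
    (hρ : Set.BijOn ρ (Set.Icc 1 n) (Set.Icc 1 n))
    (hπd : NoDescentsBefore π k) (hρd : NoDescentsAfter ρ k n) :
    (invCount (starMap n k π ρ) (1 - k) (2 * n - k) : ℤ) =
      invCount π 1 n + invCount ρ 1 n + k * (n - k) := by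
  set f := starMap n k π ρ with hf
  have hπm := mono_of_succ π 1 k (fun i h1 h2 => hπd i h1 h2)
  have hρm := mono_of_succ ρ (k+1) n (fun i h1 h2 => hρd i (by omega) h2)
  have hπv : ∀ i, 1 ≤ i → i ≤ n → 1 ≤ π i ∧ π i ≤ n := fun i h1 h2 =>
    Set.mem_Icc.mp (hπ.mapsTo (Set.mem_Icc.mpr ⟨h1, h2⟩))
  have hρv : ∀ i, 1 ≤ i → i ≤ n → 1 ≤ ρ i ∧ ρ i ≤ n := fun i h1 h2 =>
    Set.mem_Icc.mp (hρ.mapsTo (Set.mem_Icc.mpr ⟨h1, h2⟩))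
  have hfA : ∀ i, -k < i → i ≤ 0 → f i = π (i+k) - k := fun i h1 h2 => by
    rw [hf]; simp only [starMap]; rw [if_pos ⟨by omega, h2⟩]
  have hfB : ∀ i, 0 < i → i ≤ k → f i = ρ i + n - k := fun i h1 h2 => by
    rw [hf]; simp only [starMap]; rw [if_neg (by omega), if_pos ⟨by omega, h2⟩]
  have hfC : ∀ i, k < i → i ≤ n → f i = π i - k := fun i h1 h2 => by
    rw [hf]; simp only [starMap]
    rw [if_neg (by omega), if_neg (by omega), if_pos ⟨by omega, h2⟩]
  have hfD : ∀ i, n < i → i ≤ 2*n - k → f i = ρ (i - n + k) + n - k := fun i h1 h2 =>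
    star_D n k π ρ hn hk1 hkn hπ hρ hρd i h1 h2
  set A := Finset.Ioc (-k) 0 with hA
  set B := Finset.Ioc (0:ℤ) k with hB
  set C := Finset.Ioc k n with hC
  set D := Finset.Ioc n (2*n-k) with hD
  have hdisj : ∀ a b c d : ℤ, b ≤ c → Disjoint (Finset.Ioc a b) (Finset.Ioc c d) := by
    intro a b c d hbc
    rw [Finset.disjoint_left]
    intro x hx hx'
    simp only [Finset.mem_Ioc] at hx hx'
    omega
  have hIcc1 : Finset.Icc (1-k) (2*n-k) = A ∪ (B ∪ (C ∪ D)) := by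
    rw [hA, hB, hC, hD, Finset.Ioc_union_Ioc_eq_Ioc (by omega) (by omega),
      Finset.Ioc_union_Ioc_eq_Ioc (by omega) (by omega),
      Finset.Ioc_union_Ioc_eq_Ioc (by omega) (by omega)]
    ext x
    simp only [Finset.mem_Icc, Finset.mem_Ioc]
    omega
  have hIcc2 : Finset.Icc (1:ℤ) n = B ∪ C := by
    rw [hB, hC, Finset.Ioc_union_Ioc_eq_Ioc (by omega) (by omega)]
    ext x
    simp only [Finset.mem_Icc, Finset.mem_Ioc]
    omega
  have dBCD : Disjoint B (C ∪ D) := by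
    rw [Finset.disjoint_union_right]
    exact ⟨hdisj _ _ _ _ le_rfl, hdisj _ _ _ _ hkn⟩
  have dABCD : Disjoint A (B ∪ (C ∪ D)) := by
    rw [Finset.disjoint_union_right, Finset.disjoint_union_right]
    exact ⟨hdisj _ _ _ _ le_rfl, hdisj _ _ _ _ (by omega), hdisj _ _ _ _ (by omega)⟩
  have dCD : Disjoint C D := hdisj _ _ _ _ le_rfl
  have dBC : Disjoint B C := hdisj _ _ _ _ le_rfl
  -- expansion of S over the four blocks
  have e1 : ∀ (g : ℤ → ℤ) (u : Finset ℤ), S g (A ∪ (B ∪ (C ∪ D))) u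
      = S g A u + S g B u + S g C u + S g D u := by
    intro g u
    rw [S_union_left _ _ _ _ dABCD, S_union_left _ _ _ _ dBCD, S_union_left _ _ _ _ dCD]
    ring
  have e2 : ∀ (g : ℤ → ℤ) (u : Finset ℤ), S g u (A ∪ (B ∪ (C ∪ D)))
      = S g u A + S g u B + S g u C + S g u D := by
    intro g u
    rw [S_union_right _ _ _ _ dABCD, S_union_right _ _ _ _ dBCD, S_union_right _ _ _ _ dCD]
    ring
  have hLHS : invCount f (1-k) (2*n-k)
      = (S f A A + S f A B + S f A C + S f A D)
      + (S f B A + S f B B + S f B C + S f B D)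
      + (S f C A + S f C B + S f C C + S f C D)
      + (S f D A + S f D B + S f D C + S f D D) := by
    rw [invCount_eq_S, hIcc1, e1, e2, e2, e2, e2]
  have hRπ : invCount π 1 n = S π B B + S π B C + S π C B + S π C C := by
    rw [invCount_eq_S, hIcc2, S_union_left _ _ _ _ dBC,
      S_union_right _ _ _ _ dBC, S_union_right _ _ _ _ dBC]
    ring
  have hRρ : invCount ρ 1 n = S ρ B B + S ρ B C + S ρ C B + S ρ C C := by
    rw [invCount_eq_S, hIcc2, S_union_left _ _ _ _ dBC,
      S_union_right _ _ _ _ dBC, S_union_right _ _ _ _ dBC]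
    ring
  -- position-only zero blocks
  have zpos : ∀ (g : ℤ → ℤ) (a b c d : ℤ), d ≤ a →
      S g (Finset.Ioc a b) (Finset.Ioc c d) = 0 := by
    intro g a b c d hda
    apply S_zero
    intro i hi j hj
    simp only [Finset.mem_Ioc] at hi hj
    rintro ⟨hij, -⟩
    omega
  -- value-based zero blocks
  have zAA : S f A A = 0 := by
    apply S_zero
    intro i hi j hj
    simp only [hA, Finset.mem_Ioc] at hi hj
    rintro ⟨hij, hlt⟩
    rw [hfA i hi.1 hi.2, hfA j hj.1 hj.2] at hlt
    have := hπm (i+k) (j+k) (by omega) (by omega) (by omega)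
    omega
  have zAB : S f A B = 0 := by
    apply S_zero
    intro i hi j hj
    simp only [hA, hB, Finset.mem_Ioc] at hi hj
    rintro ⟨hij, hlt⟩
    rw [hfA i hi.1 hi.2, hfB j hj.1 hj.2] at hlt
    have h1 := hπv (i+k) (by omega) (by omega)
    have h2 := hρv j (by omega) (by omega)
    omega
  have zAD : S f A D = 0 := by
    apply S_zero
    intro i hi j hj
    simp only [hA, hD, Finset.mem_Ioc] at hi hj
    rintro ⟨hij, hlt⟩
    rw [hfA i hi.1 hi.2, hfD j hj.1 hj.2] at hlt
    have h1 := hπv (i+k) (by omega) (by omega)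
    have h2 := hρv (j - n + k) (by omega) (by omega)
    omega
  have zCD : S f C D = 0 := by
    apply S_zero
    intro i hi j hj
    simp only [hC, hD, Finset.mem_Ioc] at hi hj
    rintro ⟨hij, hlt⟩
    rw [hfC i hi.1 hi.2, hfD j hj.1 hj.2] at hlt
    have h1 := hπv i (by omega) (by omega)
    have h2 := hρv (j - n + k) (by omega) (by omega)
    omega
  have zDD : S f D D = 0 := by
    apply S_zero
    intro i hi j hj
    simp only [hD, Finset.mem_Ioc] at hi hj
    rintro ⟨hij, hlt⟩
    rw [hfD i hi.1 hi.2, hfD j hj.1 hj.2] at hlt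
    have := hρm (i - n + k) (j - n + k) (by omega) (by omega) (by omega)
    omega
  have zπBB : S π B B = 0 := by
    apply S_zero
    intro i hi j hj
    simp only [hB, Finset.mem_Ioc] at hi hj
    rintro ⟨hij, hlt⟩
    have := hπm i j (by omega) hij hj.2
    omega
  have zρCC : S ρ C C = 0 := by
    apply S_zero
    intro i hi j hj
    simp only [hC, Finset.mem_Ioc] at hi hj
    rintro ⟨hij, hlt⟩
    have := hρm i j (by omega) hij hj.2
    omega
  -- transfer blocks
  have tAC : S f A C = S π B C := by
    rw [hA, hB, hC]
    apply S_shift f π 0 k k n (-k) 0 k n (-k) 0 (by ring) (by ring) (by ring) (by ring)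
    intro i j h1 h2 h3 h4
    rw [show j + (0:ℤ) = j by ring, hfC j h3 h4, hfA (i + -k) (by omega) (by omega),
      show i + -k + k = i by ring]
    omega
  have tBD : S f B D = S ρ B C := by
    rw [hB, hC, hD]
    apply S_shift f ρ 0 k k n 0 k n (2*n-k) 0 (n-k) (by ring) (by ring) (by ring) (by ring)
    intro i j h1 h2 h3 h4
    rw [show i + (0:ℤ) = i by ring, hfB i h1 h2, hfD (j + (n-k)) (by omega) (by omega),
      show j + (n - k) - n + k = j by ring]
    omega
  have tBB : S f B B = S ρ B B := by
    apply S_congr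
    intro i hi j hj
    simp only [hB, Finset.mem_Ioc] at hi hj
    rw [hfB i hi.1 hi.2, hfB j hj.1 hj.2]
    omega
  have tCC : S f C C = S π C C := by
    apply S_congr
    intro i hi j hj
    simp only [hC, Finset.mem_Ioc] at hi hj
    rw [hfC i hi.1 hi.2, hfC j hj.1 hj.2]
    omega
  have tBC : S f B C = k.toNat * (n-k).toNat := by
    have : S f B C = B.card * C.card := by
      apply S_full
      intro i hi j hj
      simp only [hB, hC, Finset.mem_Ioc] at hi hj
      rw [hfB i hi.1 hi.2, hfC j hj.1 hj.2]
      have h1 := hρv i (by omega) (by omega)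
      have h2 := hπv j (by omega) (by omega)
      omega
    rw [this, hB, hC, Int.card_Ioc, Int.card_Ioc]
    norm_num
  have zBA : S f B A = 0 := by rw [hA, hB]; exact zpos f _ _ _ _ (by omega)
  have zCA : S f C A = 0 := by rw [hA, hC]; exact zpos f _ _ _ _ (by omega)
  have zCB : S f C B = 0 := by rw [hB, hC]; exact zpos f _ _ _ _ (by omega)
  have zDA : S f D A = 0 := by rw [hA, hD]; exact zpos f _ _ _ _ (by omega)
  have zDB : S f D B = 0 := by rw [hB, hD]; exact zpos f _ _ _ _ (by omega)
  have zDC : S f D C = 0 := by rw [hC, hD]; exact zpos f _ _ _ _ (by omega)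
  have zπCB : S π C B = 0 := by rw [hB, hC]; exact zpos π _ _ _ _ (by omega)
  have zρCB : S ρ C B = 0 := by rw [hB, hC]; exact zpos ρ _ _ _ _ (by omega)
  have key : invCount f (1-k) (2*n-k)
      = invCount π 1 n + invCount ρ 1 n + k.toNat * (n-k).toNat := by
    rw [hLHS, hRπ, hRρ]
    omega
  rw [key]
  push_cast
  rw [Int.toNat_of_nonneg (by omega : (0:ℤ) ≤ k), Int.toNat_of_nonneg (by omega : (0:ℤ) ≤ n - k)]
end
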